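/- The maps Â_i(A) = A_i − (1/2) θ^{kj} A_k (∂_j A_i + F_{ji}) and λ̂(λ, A) = λ + (1/2) θ^{ij} (∂_i λ) A_j, where F_{ji} = ∂_j A_i − ∂_i A_j, satisfy the Seiberg-Witten equation Â_i(A + ∂λ) − Â_i(A) = ∂_i λ̂ + [Â_i, λ̂]⋆ up to terms of order θ², for infinitesimal λ (i.e., working to first order in λ and first order in θ). -/

import Mathlib

open MvPolynomial

/- STATEMENT 4: the first-order Seiberg-Witten map satisfies the SW equation up
to terms of order θ² and λ².  We work in `MvPolynomial (Fin n ⊕ Fin 2) ℝ`: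
the extra variables `u = X (inr 0)` and `v = X (inr 1)` are formal bookkeeping
parameters multiplying `θ` and `λ` respectively, and "up to O(θ²), first order
in λ" means membership in the ideal generated by `u²` and `v²`. -/

variable (n : ℕ)

abbrev P2 (n : ℕ) := MvPolynomial (Fin n ⊕ Fin 2) ℝ

noncomputable def uu (n : ℕ) : P2 n := X (Sum.inr 0)
noncomputable def vv (n : ℕ) : P2 n := X (Sum.inr 1)
noncomputable def emb (n : ℕ) : MvPolynomial (Fin n) ℝ →ₐ[ℝ] P2 n := rename Sum.inl
noncomputable def pd (n : ℕ) (i : Fin n) : P2 n → P2 n := fun f => pderiv (Sum.inl i) f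

/-- `Â_i(B) = B_i − (1/2)θ^{kj} B_k(∂_j B_i + F_{ji})`, `F_{ji} = ∂_j B_i − ∂_i B_j`
(the θ-term carries the formal parameter `u`). -/
noncomputable def hatA (θ : Matrix (Fin n) (Fin n) ℝ) (B : Fin n → P2 n) (i : Fin n) :
    P2 n :=
  B i - (1 / 2 : ℝ) • (uu n * ∑ k : Fin n, ∑ j : Fin n,
    θ k j • (B k * (pd n j (B i) + (pd n j (B i) - pd n i (B j)))))

/-- `λ̂(λ,A) = λ + (1/2)θ^{ij}(∂_iλ) A_j` (`λ` carries `v`, the θ-term `u·v`). -/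
noncomputable def hatLam (θ : Matrix (Fin n) (Fin n) ℝ)
    (A : Fin n → MvPolynomial (Fin n) ℝ) (lam : MvPolynomial (Fin n) ℝ) : P2 n :=
  vv n * emb n lam + (1 / 2 : ℝ) • (uu n * vv n * ∑ i : Fin n, ∑ j : Fin n,
    θ i j • (pd n i (emb n lam) * emb n (A j)))

/-- First order in θ of the star commutator: `[x,y]_⋆ = θ^{ij}∂_i x ∂_j y + O(θ²)`. -/
noncomputable def brk1 (θ : Matrix (Fin n) (Fin n) ℝ) (x y : P2 n) : P2 n :=
  uu n * ∑ i : Fin n, ∑ j : Fin n, θ i j • (pd n i x * pd n j y)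

section helpers
variable {n}
lemma pd_add (j : Fin n) (f g : P2 n) : pd n j (f + g) = pd n j f + pd n j g := map_add _ _ _
lemma pd_sub (j : Fin n) (f g : P2 n) : pd n j (f - g) = pd n j f - pd n j g := map_sub _ _ _
lemma pd_smul (j : Fin n) (r : ℝ) (f : P2 n) : pd n j (r • f) = r • pd n j f :=
  (pderiv (R := ℝ) (Sum.inl j)).toLinearMap.map_smul r f
lemma pd_mul (j : Fin n) (f g : P2 n) : pd n j (f * g) = pd n j f * g + f * pd n j g := pderiv_mul
lemma pd_sum (j : Fin n) {α : Type*} (s : Finset α) (f : α → P2 n) :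
    pd n j (∑ x ∈ s, f x) = ∑ x ∈ s, pd n j (f x) := map_sum _ _ _
lemma pd_uu (j : Fin n) : pd n j (uu n) = 0 := pderiv_X_of_ne (by simp)
lemma pd_vv (j : Fin n) : pd n j (vv n) = 0 := pderiv_X_of_ne (by simp)

lemma pderiv_comm' {σ : Type*} [DecidableEq σ] (a b : σ) (f : MvPolynomial σ ℝ) :
    pderiv a (pderiv b f) = pderiv b (pderiv a f) := by
  induction f using MvPolynomial.induction_on' with
  | add p q hp hq => simp [hp, hq]
  | monomial s c =>
    rcases eq_or_ne a b with rfl | hab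
    · rfl
    · simp only [pderiv_monomial]
      have h1 : s - Finsupp.single b 1 - Finsupp.single a 1
          = s - Finsupp.single a 1 - Finsupp.single b 1 := by
        ext x
        simp only [Finsupp.tsub_apply]
        omega
      have h2 : (((s - Finsupp.single b 1 : _ →₀ ℕ) a : ℕ) : ℝ) = s a := by
        rw [Finsupp.tsub_apply, Finsupp.single_apply]
        simp [Ne.symm hab]
      have h3 : (((s - Finsupp.single a 1 : _ →₀ ℕ) b : ℕ) : ℝ) = s b := by
        rw [Finsupp.tsub_apply, Finsupp.single_apply]
        simp [hab]
      rw [h1, h2, h3, mul_right_comm]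

lemma pd_comm (a b : Fin n) (f : P2 n) : pd n a (pd n b f) = pd n b (pd n a f) :=
  pderiv_comm' _ _ f

lemma sum_skew {M : Type*} [AddCommGroup M] [Module ℝ M]
    (θ : Matrix (Fin n) (Fin n) ℝ) (hθ : ∀ i j, θ j i = -θ i j)
    (h : Fin n → Fin n → M) :
    ∑ k : Fin n, ∑ j : Fin n, θ k j • (h k j + h j k) = 0 := by
  have key : ∑ k : Fin n, ∑ j : Fin n, θ k j • h j k
      = - ∑ k : Fin n, ∑ j : Fin n, θ k j • h k j := by
    rw [Finset.sum_comm]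
    rw [← Finset.sum_neg_distrib]
    refine Finset.sum_congr rfl fun a _ => ?_
    rw [← Finset.sum_neg_distrib]
    refine Finset.sum_congr rfl fun b _ => ?_
    rw [hθ a b, neg_smul]
  simp only [smul_add, Finset.sum_add_distrib, key, add_neg_cancel]

lemma key_abstract {Q : Type*} [CommRing Q] [Algebra ℝ Q]
    (θ : Matrix (Fin n) (Fin n) ℝ) (hθ : ∀ i j, θ j i = -θ i j)
    (u v : Q) (hu : u ^ 2 = 0) (hv : v ^ 2 = 0)
    (E m q a b G H : Fin n → Q) :
    (1/2 : ℝ) • (u * ∑ k : Fin n, ∑ j : Fin n, θ k j •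
        ((E k + v * a k) * ((m j + v * b j) + ((m j + v * b j) - (q j + v * b j)))
          - E k * (m j + (m j - q j))))
      + (1/2 : ℝ) • (u * v * ∑ k : Fin n, ∑ j : Fin n, θ k j •
        (b k * E j + a k * q j))
      + u * ∑ k : Fin n, ∑ j : Fin n, θ k j •
        ((m k - (1/2 : ℝ) • (u * G k)) * (v * a j + (1/2 : ℝ) • (u * v * H j)))
      = 0 := by
  have hu3 : u ^ 3 = 0 := by rw [pow_succ, hu, zero_mul]
  rw [show (0 : Q) = ∑ k : Fin n, ∑ j : Fin n, θ k j •
      (((1/2 : ℝ) • (u * v * (E k * b j + 2 * (a k * m j))))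
        + ((1/2 : ℝ) • (u * v * (E j * b k + 2 * (a j * m k))))) from
    (sum_skew θ hθ _).symm]
  simp only [Finset.mul_sum, Finset.smul_sum, ← Finset.sum_add_distrib]
  refine Finset.sum_congr rfl fun k _ => Finset.sum_congr rfl fun j _ => ?_
  simp only [Algebra.smul_def, map_mul]
  set c := algebraMap ℝ Q (1/2 : ℝ)
  set w := algebraMap ℝ Q (θ k j)
  ring_nf
  simp only [hu, hv, hu3, mul_zero, zero_mul, add_zero, zero_add]
  have hc : (algebraMap ℝ Q) (1/2 : ℝ) * 2 = 1 := by
    rw [show (2 : Q) = algebraMap ℝ Q 2 from (map_ofNat _ 2).symm, ← map_mul]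
    norm_num
  linear_combination (-(u * w * v * m k * a j)) * hc
end helpers

theorem seiberg_witten_first_order (θ : Matrix (Fin n) (Fin n) ℝ)
    (hθ : ∀ i j, θ j i = -θ i j)
    (A : Fin n → MvPolynomial (Fin n) ℝ) (lam : MvPolynomial (Fin n) ℝ) (i : Fin n) :
    hatA n θ (fun k => emb n (A k) + vv n * pd n k (emb n lam)) i
      - hatA n θ (fun k => emb n (A k)) i
      - (pd n i (hatLam n θ A lam)
          + brk1 n θ (hatA n θ (fun k => emb n (A k)) i) (hatLam n θ A lam))
      ∈ Ideal.span {uu n ^ 2, vv n ^ 2} := by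
  classical
  set L := emb n lam with hLdef
  have hswap : ∀ a : Fin n, pd n a (pd n i L) = pd n i (pd n a L) := fun a => pd_comm a i L
  have h1 : hatA n θ (fun k => emb n (A k) + vv n * pd n k L) i
        - hatA n θ (fun k => emb n (A k)) i
      = vv n * pd n i L - (1/2 : ℝ) • (uu n * ∑ k : Fin n, ∑ j : Fin n, θ k j •
          ((emb n (A k) + vv n * pd n k L) *
             ((pd n j (emb n (A i)) + vv n * pd n i (pd n j L)) +
              ((pd n j (emb n (A i)) + vv n * pd n i (pd n j L))
                - (pd n i (emb n (A j)) + vv n * pd n i (pd n j L))))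
           - emb n (A k) * (pd n j (emb n (A i))
               + (pd n j (emb n (A i)) - pd n i (emb n (A j)))))) := by
    simp only [hatA, pd_add, pd_mul, pd_vv, zero_mul, add_zero, zero_add, hswap]
    simp only [smul_sub, Finset.sum_sub_distrib]
    simp only [mul_sub, smul_sub]
    abel
  have h2 : pd n i (hatLam n θ A lam)
      = vv n * pd n i L + (1/2 : ℝ) • (uu n * vv n * ∑ k : Fin n, ∑ j : Fin n, θ k j •
          (pd n i (pd n k L) * emb n (A j) + pd n k L * pd n i (emb n (A j)))) := by
    simp only [hatLam, ← hLdef, pd_add, pd_smul, pd_mul, pd_sum, pd_uu, pd_vv,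
      zero_mul, mul_zero, zero_add, add_zero]
  have hDA : ∀ k, pd n k (hatA n θ (fun k => emb n (A k)) i)
      = pd n k (emb n (A i)) - (1/2 : ℝ) • (uu n * pd n k (∑ p : Fin n, ∑ q : Fin n,
          θ p q • (emb n (A p) * (pd n q (emb n (A i))
            + (pd n q (emb n (A i)) - pd n i (emb n (A q))))))) := by
    intro k
    simp only [hatA]
    rw [pd_sub, pd_smul, pd_mul, pd_uu, zero_mul, zero_add]
  have hDL : ∀ b, pd n b (hatLam n θ A lam)
      = vv n * pd n b L + (1/2 : ℝ) • (uu n * vv n * pd n b (∑ p : Fin n, ∑ q : Fin n,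
          θ p q • (pd n p L * emb n (A q)))) := by
    intro b
    simp only [hatLam, ← hLdef, pd_add, pd_smul, pd_mul, pd_uu, pd_vv,
      zero_mul, mul_zero, zero_add, add_zero]
  have h3 : brk1 n θ (hatA n θ (fun k => emb n (A k)) i) (hatLam n θ A lam)
      = uu n * ∑ k : Fin n, ∑ j : Fin n, θ k j •
          ((pd n k (emb n (A i)) - (1/2 : ℝ) • (uu n * pd n k (∑ p : Fin n, ∑ q : Fin n,
              θ p q • (emb n (A p) * (pd n q (emb n (A i))
                + (pd n q (emb n (A i)) - pd n i (emb n (A q))))))))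
            * (vv n * pd n j L + (1/2 : ℝ) • (uu n * vv n * pd n j (∑ p : Fin n, ∑ q : Fin n,
              θ p q • (pd n p L * emb n (A q)))))) := by
    simp only [brk1]
    simp only [hDA, hDL]
  rw [h1, h2, h3]
  rw [← Ideal.Quotient.eq_zero_iff_mem, ← Ideal.Quotient.mkₐ_eq_mk ℝ]
  simp only [map_sub, map_add, map_mul, map_smul, map_sum]
  set Φ := Ideal.Quotient.mkₐ ℝ (Ideal.span {uu n ^ 2, vv n ^ 2}) with hPhi
  have hu : Φ (uu n) ^ 2 = 0 := by
    rw [← map_pow, hPhi, Ideal.Quotient.mkₐ_eq_mk, Ideal.Quotient.eq_zero_iff_mem]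
    exact Ideal.subset_span (by simp)
  have hv : Φ (vv n) ^ 2 = 0 := by
    rw [← map_pow, hPhi, Ideal.Quotient.mkₐ_eq_mk, Ideal.Quotient.eq_zero_iff_mem]
    exact Ideal.subset_span (by simp)
  have key := key_abstract θ hθ (Φ (uu n)) (Φ (vv n)) hu hv
      (fun k => Φ (emb n (A k))) (fun k => Φ (pd n k (emb n (A i))))
      (fun j => Φ (pd n i (emb n (A j)))) (fun k => Φ (pd n k L))
      (fun j => Φ (pd n i (pd n j L)))
      (fun k => Φ (pd n k (∑ p : Fin n, ∑ q : Fin n,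
        θ p q • (emb n (A p) * (pd n q (emb n (A i))
          + (pd n q (emb n (A i)) - pd n i (emb n (A q))))))))
      (fun j => Φ (pd n j (∑ p : Fin n, ∑ q : Fin n, θ p q • (pd n p L * emb n (A q)))))
  linear_combination (norm := abel) -key
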